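/- Let R be a commutative ring, let u, z ∈ R, and let Y = z·T⁻¹ + u + T be the Laurent polynomial over R. Then for all integers j ≥ 0 and p ≥ 0, the coefficient of T^{−p} in Y^j equals z^p times the coefficient of T^{p} in Y^j. -/

import Mathlib

open LaurentPolynomial

lemma mul_apply_key (R : Type*) [CommRing R] (u z : R) (f : LaurentPolynomial R) (k : ℤ) :
    ((C z * T (-1) + C u + T 1 : R[T;T⁻¹]) * f).coeff k =
      z * f.coeff (k + 1) + u * f.coeff k + f.coeff (k - 1) := by
  have h1 : (C z * T (-1) : R[T;T⁻¹]) = AddMonoidAlgebra.single (-1 : ℤ) z := (single_eq_C_mul_T z (-1)).symm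
  have h2 : (C u : R[T;T⁻¹]) = AddMonoidAlgebra.single (0 : ℤ) u := by
    simpa using (single_eq_C_mul_T u 0).symm
  have h3 : (T 1 : R[T;T⁻¹]) = AddMonoidAlgebra.single (1 : ℤ) (1 : R) := by
    simpa using (single_eq_C_mul_T (1 : R) 1).symm
  have e1 : ((C z * T (-1) : R[T;T⁻¹]) * f).coeff k = z * f.coeff (k + 1) := by
    rw [h1]
    have := AddMonoidAlgebra.coeff_single_mul_apply f z (-1 : ℤ) k
    simpa [neg_neg, add_comm] using this
  have e2 : ((C u : R[T;T⁻¹]) * f).coeff k = u * f.coeff k := by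
    rw [h2]
    have := AddMonoidAlgebra.coeff_single_mul_apply f u (0 : ℤ) k
    simpa using this
  have e3 : ((T 1 : R[T;T⁻¹]) * f).coeff k = f.coeff (k - 1) := by
    rw [h3]
    have := AddMonoidAlgebra.coeff_single_mul_apply f (1 : R) (1 : ℤ) k
    simpa [neg_add_eq_sub] using this
  rw [add_mul, add_mul]
  rw [show ((C z * T (-1) : R[T;T⁻¹]) * f + (C u : R[T;T⁻¹]) * f + (T 1 : R[T;T⁻¹]) * f).coeff k
      = ((C z * T (-1) : R[T;T⁻¹]) * f).coeff k + ((C u : R[T;T⁻¹]) * f).coeff k + ((T 1 : R[T;T⁻¹]) * f).coeff k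
    from rfl]
  rw [e1, e2, e3]

lemma key (R : Type*) [CommRing R] (u z : R) (j : ℕ) : ∀ p : ℕ,
    ((C z * T (-1) + C u + T 1 : R[T;T⁻¹]) ^ j).coeff (-(p : ℤ)) =
      z ^ p * ((C z * T (-1) + C u + T 1 : R[T;T⁻¹]) ^ j).coeff (p : ℤ) := by
  induction j with
  | zero =>
    intro p
    rcases Nat.eq_zero_or_pos p with h | h
    · simp [h]
    · have h1 : (1 : R[T;T⁻¹]).coeff (-(p : ℤ)) = 0 := by
        rw [AddMonoidAlgebra.one_def, AddMonoidAlgebra.coeff_single, Finsupp.single_apply_eq_zero]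
        intro h'; omega
      have h2 : (1 : R[T;T⁻¹]).coeff ((p : ℤ)) = 0 := by
        rw [AddMonoidAlgebra.one_def, AddMonoidAlgebra.coeff_single, Finsupp.single_apply_eq_zero]
        intro h'; omega
      simp [pow_zero, h1, h2]
  | succ n ih =>
    intro p
    rw [pow_succ, mul_comm]
    rw [mul_apply_key, mul_apply_key]
    rcases Nat.eq_zero_or_pos p with h | h
    · subst h; simp
    · obtain ⟨q, rfl⟩ := Nat.exists_eq_add_of_le h  -- p = 1 + q
      have hq1 : (-(((1 + q : ℕ)) : ℤ) + 1) = -(q : ℤ) := by push_cast; ring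
      have hq2 : (-(((1 + q : ℕ)) : ℤ) - 1) = -((q + 2 : ℕ) : ℤ) := by push_cast; ring
      have hq3 : ((((1 + q : ℕ)) : ℤ) + 1) = ((q + 2 : ℕ) : ℤ) := by push_cast; ring
      have hq4 : ((((1 + q : ℕ)) : ℤ) - 1) = ((q : ℕ) : ℤ) := by push_cast; ring
      rw [hq1, hq2, hq3, hq4, ih q, ih (q + 2), ih (1 + q)]
      push_cast
      ring

/-- Let `R` be a commutative ring, `u z ∈ R`, and
`Y = z·T⁻¹ + u + T` the Laurent polynomial over `R`.  Then for all `j, p ≥ 0`,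
the coefficient of `T^(-p)` in `Y^j` equals `z^p` times the coefficient of
`T^p` in `Y^j`. -/
theorem stmt10 (R : Type*) [CommRing R] (u z : R) (j p : ℕ) :
    ((C z * T (-1) + C u + T 1 : R[T;T⁻¹]) ^ j).coeff (-(p : ℤ)) =
      z ^ p * ((C z * T (-1) + C u + T 1 : R[T;T⁻¹]) ^ j).coeff (p : ℤ) := by
  exact key R u z j p
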